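/- arXiv:1205.6350 — 2 statements merged into one kernel-verified Lean document; each statement's English description precedes it below -/
import Mathlib

section
/- (No marginally trapped meridian surfaces of parabolic type with κ̄ ≡ 0.) Assume moreover f' > 0 (hence g' < 0) on I, and suppose κ̄(v) = 0 for all v ∈ J, i.e. φφ̈ − 2φ̇² − φ² = 0 on J. Then at every (u,v) ∈ I × J the mean curvature vector satisfies ⟨H(u,v),H(u,v)⟩ ≤ 0, with equality if and only if H(u,v) = 0. Consequently there is no marginally trapped meridian surface of parabolic type with κ̄ ≡ 0 and nonvanishing mean curvature vector. -/
namespace MeridianParabolic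

noncomputable section

/-- The Minkowski inner product of signature (3,1) on `ℝ⁴`:
`⟨x,y⟩ = x₁y₁ + x₂y₂ + x₃y₃ − x₄y₄`. -/
def mink (x y : Fin 4 → ℝ) : ℝ := x 0 * y 0 + x 1 * y 1 + x 2 * y 2 - x 3 * y 3

/-- The first standard basis vector `e₁`. -/
def e1 : Fin 4 → ℝ := ![1, 0, 0, 0]

/-- The second standard basis vector `e₂`. -/
def e2 : Fin 4 → ℝ := ![0, 1, 0, 0]

/-- The lightlike vector `ξ₁ = (e₃ + e₄)/√2`. -/
def xi1 : Fin 4 → ℝ := ![0, 0, 1 / Real.sqrt 2, 1 / Real.sqrt 2]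

/-- The lightlike vector `ξ₂ = (−e₃ + e₄)/√2`. -/
def xi2 : Fin 4 → ℝ := ![0, 0, -(1 / Real.sqrt 2), 1 / Real.sqrt 2]

/-- The meridian surface of parabolic type
`z(u,v) = fφ cos v · e₁ + fφ sin v · e₂ + (fφ²/2 + g) ξ₁ + f ξ₂`. -/
def z (f g φ : ℝ → ℝ) (u v : ℝ) : Fin 4 → ℝ :=
  (f u * φ v * Real.cos v) • e1 + (f u * φ v * Real.sin v) • e2 +
    (f u * (φ v) ^ 2 / 2 + g u) • xi1 + f u • xi2

/-- The partial derivative `z_u`. -/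
def zu (f g φ : ℝ → ℝ) (u v : ℝ) : Fin 4 → ℝ := deriv (fun t => z f g φ t v) u

/-- The partial derivative `z_v`. -/
def zv (f g φ : ℝ → ℝ) (u v : ℝ) : Fin 4 → ℝ := deriv (fun t => z f g φ u t) v

/-- The second partial derivative `z_uu`. -/
def zuu (f g φ : ℝ → ℝ) (u v : ℝ) : Fin 4 → ℝ := deriv (fun t => zu f g φ t v) u

/-- The second partial derivative `z_uv`. -/
def zuv (f g φ : ℝ → ℝ) (u v : ℝ) : Fin 4 → ℝ := deriv (fun t => zu f g φ u t) v

/-- The second partial derivative `z_vv`. -/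
def zvv (f g φ : ℝ → ℝ) (u v : ℝ) : Fin 4 → ℝ := deriv (fun t => zv f g φ u t) v

/-- The normal field `n₁ = ((φ̇ sin v + φ cos v) e₁ + (−φ̇ cos v + φ sin v) e₂ + φ² ξ₁)/√(φ̇² + φ²)`. -/
def n1 (φ : ℝ → ℝ) (v : ℝ) : Fin 4 → ℝ :=
  (Real.sqrt ((deriv φ v) ^ 2 + (φ v) ^ 2))⁻¹ •
    ((deriv φ v * Real.sin v + φ v * Real.cos v) • e1 +
      (-(deriv φ v) * Real.cos v + φ v * Real.sin v) • e2 + (φ v) ^ 2 • xi1)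

/-- The normal field `n₂ = √(−f'/(2g')) (φ cos v e₁ + φ sin v e₂ + ((f'φ² − 2g')/(2f')) ξ₁ + ξ₂)`. -/
def n2 (f g φ : ℝ → ℝ) (u v : ℝ) : Fin 4 → ℝ :=
  Real.sqrt (-(deriv f u) / (2 * deriv g u)) •
    ((φ v * Real.cos v) • e1 + (φ v * Real.sin v) • e2 +
      ((deriv f u * (φ v) ^ 2 - 2 * deriv g u) / (2 * deriv f u)) • xi1 + xi2)

/-- The mean curvature vector
`H = (1/2)(⟨z_uu,n₁⟩/E + ⟨z_vv,n₁⟩/G) n₁ − (1/2)(⟨z_uu,n₂⟩/E + ⟨z_vv,n₂⟩/G) n₂`,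
where `E = ⟨z_u,z_u⟩` and `G = ⟨z_v,z_v⟩`. -/
def Hvec (f g φ : ℝ → ℝ) (u v : ℝ) : Fin 4 → ℝ :=
  (1 / 2 * (mink (zuu f g φ u v) (n1 φ v) / mink (zu f g φ u v) (zu f g φ u v) +
      mink (zvv f g φ u v) (n1 φ v) / mink (zv f g φ u v) (zv f g φ u v))) • n1 φ v -
  (1 / 2 * (mink (zuu f g φ u v) (n2 f g φ u v) / mink (zu f g φ u v) (zu f g φ u v) +
      mink (zvv f g φ u v) (n2 f g φ u v) / mink (zv f g φ u v) (zv f g φ u v))) • n2 f g φ u v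


/-! ### Auxiliary lemmas -/

section Aux

lemma mink_add_left (x y w : Fin 4 → ℝ) : mink (x + y) w = mink x w + mink y w := by
  simp [mink]; ring
lemma mink_add_right (x y w : Fin 4 → ℝ) : mink w (x + y) = mink w x + mink w y := by
  simp [mink]; ring
lemma mink_sub_left (x y w : Fin 4 → ℝ) : mink (x - y) w = mink x w - mink y w := by
  simp [mink]; ring
lemma mink_sub_right (x y w : Fin 4 → ℝ) : mink w (x - y) = mink w x - mink w y := by
  simp [mink]; ring
lemma mink_smul_left (r : ℝ) (x w : Fin 4 → ℝ) : mink (r • x) w = r * mink x w := by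
  simp [mink]; ring
lemma mink_smul_right (r : ℝ) (x w : Fin 4 → ℝ) : mink w (r • x) = r * mink w x := by
  simp [mink]; ring
lemma mink_zero_left (w : Fin 4 → ℝ) : mink 0 w = 0 := by simp [mink]
lemma mink_zero_right (w : Fin 4 → ℝ) : mink w 0 = 0 := by simp [mink]
lemma sqrt2_mul_self : Real.sqrt 2 * Real.sqrt 2 = 2 := Real.mul_self_sqrt (by norm_num)
lemma mink_e1_e1 : mink e1 e1 = 1 := by simp [mink, e1]
lemma mink_e2_e2 : mink e2 e2 = 1 := by simp [mink, e2]
lemma mink_e1_e2 : mink e1 e2 = 0 := by simp [mink, e1, e2]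
lemma mink_e2_e1 : mink e2 e1 = 0 := by simp [mink, e1, e2]
lemma mink_e1_xi1 : mink e1 xi1 = 0 := by simp [mink, e1, xi1]
lemma mink_xi1_e1 : mink xi1 e1 = 0 := by simp [mink, e1, xi1]
lemma mink_e1_xi2 : mink e1 xi2 = 0 := by simp [mink, e1, xi2]
lemma mink_xi2_e1 : mink xi2 e1 = 0 := by simp [mink, e1, xi2]
lemma mink_e2_xi1 : mink e2 xi1 = 0 := by simp [mink, e2, xi1]
lemma mink_xi1_e2 : mink xi1 e2 = 0 := by simp [mink, e2, xi1]
lemma mink_e2_xi2 : mink e2 xi2 = 0 := by simp [mink, e2, xi2]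
lemma mink_xi2_e2 : mink xi2 e2 = 0 := by simp [mink, e2, xi2]
lemma mink_xi1_xi1 : mink xi1 xi1 = 0 := by simp [mink, xi1]
lemma mink_xi2_xi2 : mink xi2 xi2 = 0 := by simp [mink, xi2]
lemma mink_xi1_xi2 : mink xi1 xi2 = -1 := by
  have h := sqrt2_mul_self
  have h2 : Real.sqrt 2 ≠ 0 := by positivity
  simp [mink, xi1, xi2]; field_simp; linarith
lemma mink_xi2_xi1 : mink xi2 xi1 = -1 := by
  have h := sqrt2_mul_self
  have h2 : Real.sqrt 2 ≠ 0 := by positivity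
  simp [mink, xi1, xi2]; field_simp; linarith

/-- the vector `W(v)` with `z(u,v) = f(u) • W(v) + g(u) • ξ₁`. -/
def Wv (φ : ℝ → ℝ) (v : ℝ) : Fin 4 → ℝ :=
  (φ v * Real.cos v) • e1 + (φ v * Real.sin v) • e2 + ((φ v) ^ 2 / 2) • xi1 + xi2

lemma z_eq_smul (f g φ : ℝ → ℝ) (t v : ℝ) :
    z f g φ t v = f t • Wv φ v + g t • xi1 := by
  funext i
  fin_cases i <;>
    simp [z, Wv, e1, e2, xi1, xi2, Matrix.cons_val_zero, Matrix.cons_val_one] <;> ring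

lemma hasDerivAt_z_u (f g φ : ℝ → ℝ) (v t : ℝ)
    (hft : DifferentiableAt ℝ f t) (hgt : DifferentiableAt ℝ g t) :
    HasDerivAt (fun s => z f g φ s v) (deriv f t • Wv φ v + deriv g t • xi1) t := by
  have hfun : (fun s => z f g φ s v) = fun s => f s • Wv φ v + g s • xi1 :=
    funext fun s => z_eq_smul f g φ s v
  rw [hfun]
  exact (hft.hasDerivAt.smul_const (Wv φ v)).add (hgt.hasDerivAt.smul_const xi1)

lemma hasDerivAt_z_v (f g φ : ℝ → ℝ) (u t : ℝ) (hφt : DifferentiableAt ℝ φ t) :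
    HasDerivAt (fun s => z f g φ u s)
      (((f u * (deriv φ t * Real.cos t - φ t * Real.sin t)) • e1 +
        (f u * (deriv φ t * Real.sin t + φ t * Real.cos t)) • e2 +
        (f u * (φ t * deriv φ t)) • xi1)) t := by
  have h1 : HasDerivAt (fun s => f u * φ s * Real.cos s)
      (f u * (deriv φ t * Real.cos t - φ t * Real.sin t)) t := by
    have h := (hφt.hasDerivAt.mul (Real.hasDerivAt_cos t)).const_mul (f u)
    have he : (fun s => f u * (φ s * Real.cos s)) = fun s => f u * φ s * Real.cos s := by
      funext s; ring
    simp only [Pi.mul_apply] at h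
    rw [he] at h
    convert h using 1 <;> first | rfl | ring
  have h2 : HasDerivAt (fun s => f u * φ s * Real.sin s)
      (f u * (deriv φ t * Real.sin t + φ t * Real.cos t)) t := by
    have h := (hφt.hasDerivAt.mul (Real.hasDerivAt_sin t)).const_mul (f u)
    have he : (fun s => f u * (φ s * Real.sin s)) = fun s => f u * φ s * Real.sin s := by
      funext s; ring
    simp only [Pi.mul_apply] at h
    rw [he] at h
    convert h using 1 <;> first | rfl | ring
  have h3 : HasDerivAt (fun s => f u * (φ s) ^ 2 / 2 + g u)
      (f u * (φ t * deriv φ t)) t := by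
    have h := (((hφt.hasDerivAt.pow 2).const_mul (f u)).div_const 2).add_const (g u)
    convert h using 1 <;> first | rfl | ring
  have h4 : HasDerivAt (fun _ : ℝ => f u • xi2) (0 : Fin 4 → ℝ) t := hasDerivAt_const t _
  have := (((h1.smul_const e1).add (h2.smul_const e2)).add (h3.smul_const xi1)).add h4
  simp only [add_zero] at this
  exact this

lemma zv_eq (f g φ : ℝ → ℝ) (u t : ℝ) (hφt : DifferentiableAt ℝ φ t) :
    zv f g φ u t =
      (f u * (deriv φ t * Real.cos t - φ t * Real.sin t)) • e1 +
        (f u * (deriv φ t * Real.sin t + φ t * Real.cos t)) • e2 +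
        (f u * (φ t * deriv φ t)) • xi1 :=
  (hasDerivAt_z_v f g φ u t hφt).deriv

lemma hasDerivAt_zv_expl (f φ : ℝ → ℝ) (u v : ℝ) (hφv : DifferentiableAt ℝ φ v)
    (hφ'v : DifferentiableAt ℝ (deriv φ) v) :
    HasDerivAt (fun t => (f u * (deriv φ t * Real.cos t - φ t * Real.sin t)) • e1 +
        (f u * (deriv φ t * Real.sin t + φ t * Real.cos t)) • e2 +
        (f u * (φ t * deriv φ t)) • xi1)
      ((f u * (deriv (deriv φ) v * Real.cos v - 2 * deriv φ v * Real.sin v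
          - φ v * Real.cos v)) • e1 +
       (f u * (deriv (deriv φ) v * Real.sin v + 2 * deriv φ v * Real.cos v
          - φ v * Real.sin v)) • e2 +
       (f u * ((deriv φ v) ^ 2 + φ v * deriv (deriv φ) v)) • xi1) v := by
  have h1 : HasDerivAt (fun t => f u * (deriv φ t * Real.cos t - φ t * Real.sin t))
      (f u * (deriv (deriv φ) v * Real.cos v - 2 * deriv φ v * Real.sin v
        - φ v * Real.cos v)) v := by
    have h := ((hφ'v.hasDerivAt.mul (Real.hasDerivAt_cos v)).sub
      (hφv.hasDerivAt.mul (Real.hasDerivAt_sin v))).const_mul (f u)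
    convert h using 1 <;> first | rfl | ring
  have h2 : HasDerivAt (fun t => f u * (deriv φ t * Real.sin t + φ t * Real.cos t))
      (f u * (deriv (deriv φ) v * Real.sin v + 2 * deriv φ v * Real.cos v
        - φ v * Real.sin v)) v := by
    have h := ((hφ'v.hasDerivAt.mul (Real.hasDerivAt_sin v)).add
      (hφv.hasDerivAt.mul (Real.hasDerivAt_cos v))).const_mul (f u)
    convert h using 1 <;> first | rfl | ring
  have h3 : HasDerivAt (fun t => f u * (φ t * deriv φ t))
      (f u * ((deriv φ v) ^ 2 + φ v * deriv (deriv φ) v)) v := by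
    have h := (hφv.hasDerivAt.mul hφ'v.hasDerivAt).const_mul (f u)
    convert h using 1 <;> first | rfl | ring
  exact ((h1.smul_const e1).add (h2.smul_const e2)).add (h3.smul_const xi1)

lemma mink_comb_n1 (φ : ℝ → ℝ) (v a b : ℝ) :
    mink (a • Wv φ v + b • xi1) (n1 φ v) = 0 := by
  simp only [Wv, n1, mink_add_left, mink_add_right, mink_smul_left, mink_smul_right,
    mink_e1_e1, mink_e2_e2, mink_e1_e2, mink_e2_e1, mink_e1_xi1, mink_xi1_e1,
    mink_e1_xi2, mink_xi2_e1, mink_e2_xi1, mink_xi1_e2, mink_e2_xi2, mink_xi2_e2,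
    mink_xi1_xi1, mink_xi2_xi2, mink_xi1_xi2, mink_xi2_xi1]
  have hsc := Real.sin_sq_add_cos_sq v
  linear_combination ((Real.sqrt ((deriv φ v) ^ 2 + (φ v) ^ 2))⁻¹ * a * (φ v) ^ 2) * hsc

lemma mink_zvvexpl_n1 (φ : ℝ → ℝ) (F v : ℝ)
    (hκ : φ v * deriv (deriv φ) v - 2 * (deriv φ v) ^ 2 - (φ v) ^ 2 = 0) :
    mink ((F * (deriv (deriv φ) v * Real.cos v - 2 * deriv φ v * Real.sin v
            - φ v * Real.cos v)) • e1 +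
          (F * (deriv (deriv φ) v * Real.sin v + 2 * deriv φ v * Real.cos v
            - φ v * Real.sin v)) • e2 +
          (F * ((deriv φ v) ^ 2 + φ v * deriv (deriv φ) v)) • xi1) (n1 φ v) = 0 := by
  simp only [n1, mink_add_left, mink_add_right, mink_smul_left, mink_smul_right,
    mink_e1_e1, mink_e2_e2, mink_e1_e2, mink_e2_e1, mink_e1_xi1, mink_xi1_e1,
    mink_e1_xi2, mink_xi2_e1, mink_e2_xi1, mink_xi1_e2, mink_e2_xi2, mink_xi2_e2,
    mink_xi1_xi1, mink_xi2_xi2, mink_xi1_xi2, mink_xi2_xi1]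
  linear_combination ((Real.sqrt ((deriv φ v) ^ 2 + (φ v) ^ 2))⁻¹ * F *
      ((Real.sin v) ^ 2 + (Real.cos v) ^ 2)) * hκ

lemma mink_n2_n2 (f g φ : ℝ → ℝ) (u v : ℝ)
    (hf : 0 < deriv f u) (hg : deriv g u < 0) :
    mink (n2 f g φ u v) (n2 f g φ u v) = -1 := by
  have hF : deriv f u ≠ 0 := ne_of_gt hf
  have hG : deriv g u ≠ 0 := ne_of_lt hg
  have hpos : 0 < -(deriv f u) / (2 * deriv g u) := by
    apply div_pos_of_neg_of_neg <;> linarith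
  have hPP : Real.sqrt (-(deriv f u) / (2 * deriv g u)) *
      Real.sqrt (-(deriv f u) / (2 * deriv g u)) = -(deriv f u) / (2 * deriv g u) :=
    Real.mul_self_sqrt (le_of_lt hpos)
  have hsc := Real.sin_sq_add_cos_sq v
  simp only [n2, mink_add_left, mink_add_right, mink_smul_left, mink_smul_right,
    mink_e1_e1, mink_e2_e2, mink_e1_e2, mink_e2_e1, mink_e1_xi1, mink_xi1_e1,
    mink_e1_xi2, mink_xi2_e1, mink_e2_xi1, mink_xi1_e2, mink_e2_xi2, mink_xi2_e2,
    mink_xi1_xi1, mink_xi2_xi2, mink_xi1_xi2, mink_xi2_xi1]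
  set P := Real.sqrt (-(deriv f u) / (2 * deriv g u)) with hP
  have hPP' : P ^ 2 * (2 * deriv g u) = -deriv f u := by
    rw [sq, hPP]; field_simp
  field_simp
  linear_combination (4 * deriv f u ^ 2 * P ^ 2 * (φ v) ^ 2) * hsc + 4 * deriv f u * hPP'

end Aux

/-- no marginally trapped meridian surfaces of parabolic type with
`κ̄ ≡ 0`: assuming `f' > 0` (hence `g' < 0`) and `φφ̈ − 2φ̇² − φ² = 0` on `J`
(i.e. `κ̄ ≡ 0`), at every point `⟨H,H⟩ ≤ 0`, with equality if and only if `H = 0`;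
consequently there is no marginally trapped meridian surface of parabolic type with
`κ̄ ≡ 0` and nonvanishing mean curvature vector. -/
theorem statement18
    (I J : Set ℝ) (hIopen : IsOpen I) (hIconn : IsPreconnected I)
    (hJopen : IsOpen J) (hJconn : IsPreconnected J)
    (f g φ : ℝ → ℝ)
    (hf : ContDiffOn ℝ (⊤ : ℕ∞) f I) (hg : ContDiffOn ℝ (⊤ : ℕ∞) g I)
    (hφ : ContDiffOn ℝ (⊤ : ℕ∞) φ J)
    (hfpos : ∀ u ∈ I, 0 < f u)
    (hfg : ∀ u ∈ I, 0 < -(deriv f u * deriv g u))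
    (hφpos : ∀ v ∈ J, 0 < (deriv φ v) ^ 2 + (φ v) ^ 2)
    (hfd : ∀ u ∈ I, 0 < deriv f u) (hgd : ∀ u ∈ I, deriv g u < 0)
    (hκ0 : ∀ v ∈ J,
      φ v * deriv (deriv φ) v - 2 * (deriv φ v) ^ 2 - (φ v) ^ 2 = 0) :
    ∀ u ∈ I, ∀ v ∈ J,
      mink (Hvec f g φ u v) (Hvec f g φ u v) ≤ 0 ∧
      (mink (Hvec f g φ u v) (Hvec f g φ u v) = 0 ↔ Hvec f g φ u v = 0) := by
  intro u hu v hv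
  have h1le : ((⊤ : ℕ∞) : WithTop ℕ∞) ≠ 0 := by simp
  have hfD : ∀ t ∈ I, DifferentiableAt ℝ f t := fun t ht =>
    (hf.contDiffAt (hIopen.mem_nhds ht)).differentiableAt h1le
  have hgD : ∀ t ∈ I, DifferentiableAt ℝ g t := fun t ht =>
    (hg.contDiffAt (hIopen.mem_nhds ht)).differentiableAt h1le
  have hφD : ∀ t ∈ J, DifferentiableAt ℝ φ t := fun t ht =>
    (hφ.contDiffAt (hJopen.mem_nhds ht)).differentiableAt h1le
  have hf' : ContDiffOn ℝ ((⊤ : ℕ∞) : WithTop ℕ∞) (deriv f) I :=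
    ((contDiffOn_infty_iff_deriv_of_isOpen hIopen).1 hf).2
  have hg' : ContDiffOn ℝ ((⊤ : ℕ∞) : WithTop ℕ∞) (deriv g) I :=
    ((contDiffOn_infty_iff_deriv_of_isOpen hIopen).1 hg).2
  have hφ' : ContDiffOn ℝ ((⊤ : ℕ∞) : WithTop ℕ∞) (deriv φ) J :=
    ((contDiffOn_infty_iff_deriv_of_isOpen hJopen).1 hφ).2
  have hf'D : DifferentiableAt ℝ (deriv f) u :=
    (hf'.contDiffAt (hIopen.mem_nhds hu)).differentiableAt h1le
  have hg'D : DifferentiableAt ℝ (deriv g) u :=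
    (hg'.contDiffAt (hIopen.mem_nhds hu)).differentiableAt h1le
  have hφ'D : DifferentiableAt ℝ (deriv φ) v :=
    (hφ'.contDiffAt (hJopen.mem_nhds hv)).differentiableAt h1le
  -- explicit formula for z_uu
  have hzu : ∀ t ∈ I, zu f g φ t v = deriv f t • Wv φ v + deriv g t • xi1 := fun t ht =>
    (hasDerivAt_z_u f g φ v t (hfD t ht) (hgD t ht)).deriv
  have hzuu : zuu f g φ u v = deriv (deriv f) u • Wv φ v + deriv (deriv g) u • xi1 := by
    have hev : (fun t => zu f g φ t v) =ᶠ[nhds u]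
        fun t => deriv f t • Wv φ v + deriv g t • xi1 :=
      Filter.eventuallyEq_of_mem (hIopen.mem_nhds hu) (fun t ht => hzu t ht)
    unfold zuu
    rw [hev.deriv_eq]
    exact ((hf'D.hasDerivAt.smul_const (Wv φ v)).add (hg'D.hasDerivAt.smul_const xi1)).deriv
  -- explicit formula for z_vv
  have hzvv : zvv f g φ u v =
      (f u * (deriv (deriv φ) v * Real.cos v - 2 * deriv φ v * Real.sin v
          - φ v * Real.cos v)) • e1 +
        (f u * (deriv (deriv φ) v * Real.sin v + 2 * deriv φ v * Real.cos v
          - φ v * Real.sin v)) • e2 +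
        (f u * ((deriv φ v) ^ 2 + φ v * deriv (deriv φ) v)) • xi1 := by
    have hev : (fun t => zv f g φ u t) =ᶠ[nhds v]
        fun t => (f u * (deriv φ t * Real.cos t - φ t * Real.sin t)) • e1 +
          (f u * (deriv φ t * Real.sin t + φ t * Real.cos t)) • e2 +
          (f u * (φ t * deriv φ t)) • xi1 :=
      Filter.eventuallyEq_of_mem (hJopen.mem_nhds hv) (fun t ht => zv_eq f g φ u t (hφD t ht))
    unfold zvv
    rw [hev.deriv_eq]
    exact (hasDerivAt_zv_expl f φ u v (hφD v hv) hφ'D).deriv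
  -- the n₁-components of the second fundamental form vanish
  have hE0 : mink (zuu f g φ u v) (n1 φ v) = 0 := by
    rw [hzuu]; exact mink_comb_n1 φ v _ _
  have hG0 : mink (zvv f g φ u v) (n1 φ v) = 0 := by
    rw [hzvv]; exact mink_zvvexpl_n1 φ (f u) v (hκ0 v hv)
  have hn2 : mink (n2 f g φ u v) (n2 f g φ u v) = -1 :=
    mink_n2_n2 f g φ u v (hfd u hu) (hgd u hu)
  set B := 1 / 2 * (mink (zuu f g φ u v) (n2 f g φ u v) / mink (zu f g φ u v) (zu f g φ u v) +
      mink (zvv f g φ u v) (n2 f g φ u v) / mink (zv f g φ u v) (zv f g φ u v)) with hB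
  have hH : Hvec f g φ u v = -(B • n2 f g φ u v) := by
    rw [hB]; unfold Hvec; rw [hE0, hG0]; simp
  have hHH : mink (Hvec f g φ u v) (Hvec f g φ u v) = -(B ^ 2) := by
    rw [hH, ← neg_smul]
    rw [mink_smul_left, mink_smul_right, hn2]
    ring
  refine ⟨by rw [hHH]; nlinarith [sq_nonneg B], ?_, fun h0 => by rw [h0]; simp [mink]⟩
  intro h0
  have hB0 : B = 0 := by
    rw [hHH] at h0
    nlinarith [sq_nonneg B]
  rw [hH, hB0]
  simp


end
end MeridianParabolic
end

section
/- (Meridian surfaces of parabolic type with κ̄ ≡ 0 lie in a hyperplane.) For the meridian surface of parabolic type the identity ⟨z(u,v), n₁(v)⟩ = 0 holds for all (u,v) ∈ I × J. Moreover, if κ̄(v) = 0 for all v ∈ J (i.e. φφ̈ − 2φ̇² − φ² = 0 on J), then n₁ is a constant vector: n₁(v) = n₁(v₀) for all v, v₀ ∈ J. Consequently the image of z is contained in the linear hyperplane {x ∈ ℝ⁴ : ⟨x, N⟩ = 0}, where N = n₁(v₀) is a spacelike unit vector (⟨N,N⟩ = 1), i.e. the surface lies in a hyperplane ℝ³₁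 of ℝ⁴₁. -/
namespace MeridianParabolic

noncomputable section

/-- A function with zero derivative on an open preconnected set is constant there. -/
lemma const_of_hasDerivAt_zero {J : Set ℝ} (hJopen : IsOpen J) (hJconn : IsPreconnected J)
    {F : ℝ → ℝ} (h : ∀ v ∈ J, HasDerivAt F 0 v) :
    ∀ v ∈ J, ∀ w ∈ J, F v = F w := by
  have hconv : Convex ℝ J := convex_iff_ordConnected.mpr hJconn.ordConnected
  intro v hv w hw
  refine hconv.is_const_of_fderivWithin_eq_zero (𝕜 := ℝ)
    (fun x hx => ((h x hx).differentiableAt).differentiableWithinAt) (fun x hx => ?_) hv hw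
  have hFD : HasFDerivAt F (0 : ℝ →L[ℝ] ℝ) x := by
    have := (h x hx).hasFDerivAt
    convert this using 1
    all_goals (ext y; simp)
  rw [fderivWithin_eq_fderiv (hJopen.uniqueDiffOn x hx) hFD.differentiableAt]
  exact hFD.fderiv

lemma n1_apply (φ : ℝ → ℝ) (v : ℝ) :
    n1 φ v 0 = (Real.sqrt ((deriv φ v) ^ 2 + (φ v) ^ 2))⁻¹ *
        (deriv φ v * Real.sin v + φ v * Real.cos v) ∧
    n1 φ v 1 = (Real.sqrt ((deriv φ v) ^ 2 + (φ v) ^ 2))⁻¹ *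
        (-(deriv φ v) * Real.cos v + φ v * Real.sin v) ∧
    n1 φ v 2 = (Real.sqrt ((deriv φ v) ^ 2 + (φ v) ^ 2))⁻¹ *
        ((φ v) ^ 2 * (1 / Real.sqrt 2)) ∧
    n1 φ v 3 = (Real.sqrt ((deriv φ v) ^ 2 + (φ v) ^ 2))⁻¹ *
        ((φ v) ^ 2 * (1 / Real.sqrt 2)) := by
  refine ⟨?_, ?_, ?_, ?_⟩ <;>
    simp [n1, e1, e2, xi1, xi2]

lemma part1 (f g φ : ℝ → ℝ) (u v : ℝ) : mink (z f g φ u v) (n1 φ v) = 0 := by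
  have h2 : Real.sqrt 2 * Real.sqrt 2 = 2 := Real.mul_self_sqrt (by norm_num)
  have hs : Real.sin v ^ 2 + Real.cos v ^ 2 = 1 := Real.sin_sq_add_cos_sq v
  simp only [mink, z, n1, e1, e2, xi1, xi2, Pi.add_apply, Pi.smul_apply,
    Matrix.cons_val_zero, Matrix.cons_val_one, Matrix.head_cons,
    Matrix.cons_val_two, Matrix.tail_cons, Matrix.cons_val_three,
    smul_eq_mul]
  have h2' : 1 / Real.sqrt 2 * (1 / Real.sqrt 2) = 1/2 := by
    rw [div_mul_div_comm, h2]; norm_num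
  set c := (Real.sqrt ((deriv φ v) ^ 2 + (φ v) ^ 2))⁻¹
  linear_combination c * f u * φ v ^ 2 * hs - 2 * c * f u * φ v ^ 2 * h2'

lemma unit_n1 (φ : ℝ → ℝ) (v : ℝ) (hQ : 0 < (deriv φ v) ^ 2 + (φ v) ^ 2) :
    mink (n1 φ v) (n1 φ v) = 1 := by
  have hs : Real.sin v ^ 2 + Real.cos v ^ 2 = 1 := Real.sin_sq_add_cos_sq v
  have hs2 : Real.sqrt ((deriv φ v) ^ 2 + (φ v) ^ 2) ^ 2 = (deriv φ v) ^ 2 + (φ v) ^ 2 :=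
    Real.sq_sqrt hQ.le
  have hsne : Real.sqrt ((deriv φ v) ^ 2 + (φ v) ^ 2) ≠ 0 := (Real.sqrt_pos.mpr hQ).ne'
  simp only [mink, n1, e1, e2, xi1, xi2, Pi.add_apply, Pi.smul_apply,
    Matrix.cons_val_zero, Matrix.cons_val_one, Matrix.head_cons,
    Matrix.cons_val_two, Matrix.tail_cons, Matrix.cons_val_three,
    smul_eq_mul]
  set c := Real.sqrt ((deriv φ v) ^ 2 + (φ v) ^ 2) with hc
  have hinv : c⁻¹ * c⁻¹ * ((deriv φ v) ^ 2 + (φ v) ^ 2) = 1 := by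
    rw [← hs2]; field_simp
  linear_combination (c⁻¹ * c⁻¹ * ((deriv φ v) ^ 2 + (φ v) ^ 2)) * hs + hinv

lemma alg0 (s p q r X Y : ℝ) (hs : s ≠ 0) (hp : p ≠ 0) (hs2 : s^2 = q^2+p^2)
    (hκ : p * r - 2*q^2 - p^2 = 0) :
    0 = -(1 / (2 * s) * (2 * q ^ 1 * r + 2 * p ^ 1 * q)) / s ^ 2 * (q * X + p * Y) +
      s⁻¹ * ((r * X + q * Y) + (q * Y + p * -X)) := by
  have hr : r = (2*q^2+p^2)/p := by field_simp; linarith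
  subst hr
  field_simp
  linear_combination (-2*q*(q*X+p*Y)) * hs2

lemma alg1 (s p q r X Y : ℝ) (hs : s ≠ 0) (hp : p ≠ 0) (hs2 : s^2 = q^2+p^2)
    (hκ : p * r - 2*q^2 - p^2 = 0) :
    0 = -(1 / (2 * s) * (2 * q ^ 1 * r + 2 * p ^ 1 * q)) / s ^ 2 * (-q * Y + p * X) +
      s⁻¹ * ((-r * Y + -q * -X) + (q * X + p * Y)) := by
  have hr : r = (2*q^2+p^2)/p := by field_simp; linarith
  subst hr
  field_simp
  linear_combination (-2*q*(p*X-q*Y)) * hs2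

lemma alg2 (s p q r c2 : ℝ) (hs : s ≠ 0) (hp : p ≠ 0) (hs2 : s^2 = q^2+p^2)
    (hκ : p * r - 2*q^2 - p^2 = 0) :
    0 = -(1 / (2 * s) * (2 * q ^ 1 * r + 2 * p ^ 1 * q)) / s ^ 2 * (p ^ 2 * c2) +
      s⁻¹ * (2 * p ^ 1 * q * c2) := by
  have hr : r = (2*q^2+p^2)/p := by field_simp; linarith
  subst hr
  field_simp
  linear_combination (-2*q*p*c2) * hs2

lemma n1_comp_deriv_zero {J : Set ℝ} (hJopen : IsOpen J) {φ : ℝ → ℝ}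
    (hφ : ContDiffOn ℝ (⊤ : ℕ∞) φ J)
    (hφpos : ∀ v ∈ J, 0 < (deriv φ v) ^ 2 + (φ v) ^ 2)
    (hκ : ∀ v ∈ J, φ v * deriv (deriv φ) v - 2 * (deriv φ v) ^ 2 - (φ v) ^ 2 = 0)
    (i : Fin 4) :
    ∀ v ∈ J, HasDerivAt (fun t => n1 φ t i) 0 v := by
  intro v hv
  have hmem := hJopen.mem_nhds hv
  have hφ1 : HasDerivAt φ (deriv φ v) v :=
    ((hφ.contDiffAt hmem).differentiableAt (by simp)).hasDerivAt
  have hψ : ContDiffOn ℝ (⊤ : ℕ∞) (deriv φ) J :=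
    hφ.deriv_of_isOpen hJopen (by exact_mod_cast le_top)
  have hφ2 : HasDerivAt (deriv φ) (deriv (deriv φ) v) v :=
    ((hψ.contDiffAt hmem).differentiableAt (by simp)).hasDerivAt
  set p := φ v with hp'
  set q := deriv φ v with hq'
  set r := deriv (deriv φ) v with hr'
  have hQ := hφpos v hv
  have hκv := hκ v hv
  have hp : p ≠ 0 := by
    intro h
    rw [hp'] at h
    rw [h] at hκv
    nlinarith [hQ, sq_nonneg (deriv φ v)]
  have hQd : HasDerivAt (fun t => (deriv φ t) ^ 2 + (φ t) ^ 2)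
      (2 * q ^ 1 * r + 2 * p ^ 1 * q) v := (hφ2.pow 2).add (hφ1.pow 2)
  have hQne : q ^ 2 + p ^ 2 ≠ 0 := ne_of_gt hQ
  have hsne : Real.sqrt (q ^ 2 + p ^ 2) ≠ 0 := (Real.sqrt_pos.mpr hQ).ne'
  have hs2 : Real.sqrt (q ^ 2 + p ^ 2) ^ 2 = q ^ 2 + p ^ 2 := Real.sq_sqrt hQ.le
  have hsq : HasDerivAt (fun t => Real.sqrt ((deriv φ t) ^ 2 + (φ t) ^ 2))
      (1 / (2 * Real.sqrt (q ^ 2 + p ^ 2)) * (2 * q ^ 1 * r + 2 * p ^ 1 * q)) v :=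
    (Real.hasDerivAt_sqrt hQne).comp v hQd
  have hinv := hsq.inv hsne
  set s := Real.sqrt (q ^ 2 + p ^ 2) with hs'
  fin_cases i
  · have hA : HasDerivAt (fun t => deriv φ t * Real.sin t + φ t * Real.cos t)
        ((r * Real.sin v + q * Real.cos v) + (q * Real.cos v + p * -Real.sin v)) v :=
      (hφ2.mul (Real.hasDerivAt_sin v)).add (hφ1.mul (Real.hasDerivAt_cos v))
    have hF := hinv.mul hA
    have hz := alg0 s p q r (Real.sin v) (Real.cos v) hsne hp hs2 hκv
    replace hF := hF.congr_deriv hz.symm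
    exact hF.congr_of_eventuallyEq (Filter.Eventually.of_forall fun t => (n1_apply φ t).1)
  · have hA : HasDerivAt (fun t => -(deriv φ t) * Real.cos t + φ t * Real.sin t)
        ((-r * Real.cos v + -q * -Real.sin v) + (q * Real.sin v + p * Real.cos v)) v :=
      ((hφ2.neg).mul (Real.hasDerivAt_cos v)).add (hφ1.mul (Real.hasDerivAt_sin v))
    have hF := hinv.mul hA
    have hz := alg1 s p q r (Real.sin v) (Real.cos v) hsne hp hs2 hκv
    replace hF := hF.congr_deriv hz.symm
    exact hF.congr_of_eventuallyEq (Filter.Eventually.of_forall fun t => (n1_apply φ t).2.1)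
  · have hA : HasDerivAt (fun t => (φ t) ^ 2 * (1 / Real.sqrt 2))
        (2 * p ^ 1 * q * (1 / Real.sqrt 2)) v := (hφ1.pow 2).mul_const _
    have hF := hinv.mul hA
    have hz := alg2 s p q r (1 / Real.sqrt 2) hsne hp hs2 hκv
    replace hF := hF.congr_deriv hz.symm
    exact hF.congr_of_eventuallyEq (Filter.Eventually.of_forall fun t => (n1_apply φ t).2.2.1)
  · have hA : HasDerivAt (fun t => (φ t) ^ 2 * (1 / Real.sqrt 2))
        (2 * p ^ 1 * q * (1 / Real.sqrt 2)) v := (hφ1.pow 2).mul_const _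
    have hF := hinv.mul hA
    have hz := alg2 s p q r (1 / Real.sqrt 2) hsne hp hs2 hκv
    replace hF := hF.congr_deriv hz.symm
    exact hF.congr_of_eventuallyEq (Filter.Eventually.of_forall fun t => (n1_apply φ t).2.2.2)


/-- meridian surfaces of parabolic type with `κ̄ ≡ 0` lie in a
hyperplane: the identity `⟨z(u,v), n₁(v)⟩ = 0` always holds; moreover, if
`φφ̈ − 2φ̇² − φ² = 0` on `J` (i.e. `κ̄ ≡ 0`), then `n₁` is constant on `J` and the
image of `z` is contained in the hyperplane `{x : ⟨x,N⟩ = 0}` where `N = n₁(v₀)` is a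
spacelike unit vector, i.e. the surface lies in a hyperplane `ℝ³₁` of `ℝ⁴₁`. -/

theorem statement19
    (I J : Set ℝ) (hIopen : IsOpen I) (hIconn : IsPreconnected I)
    (hJopen : IsOpen J) (hJconn : IsPreconnected J)
    (f g φ : ℝ → ℝ)
    (hf : ContDiffOn ℝ (⊤ : ℕ∞) f I) (hg : ContDiffOn ℝ (⊤ : ℕ∞) g I)
    (hφ : ContDiffOn ℝ (⊤ : ℕ∞) φ J)
    (hfpos : ∀ u ∈ I, 0 < f u)
    (hfg : ∀ u ∈ I, 0 < -(deriv f u * deriv g u))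
    (hφpos : ∀ v ∈ J, 0 < (deriv φ v) ^ 2 + (φ v) ^ 2) :
    (∀ u ∈ I, ∀ v ∈ J, mink (z f g φ u v) (n1 φ v) = 0) ∧
    ((∀ v ∈ J, φ v * deriv (deriv φ) v - 2 * (deriv φ v) ^ 2 - (φ v) ^ 2 = 0) →
      (∀ v ∈ J, ∀ v0 ∈ J, n1 φ v = n1 φ v0) ∧
      ∀ v0 ∈ J, mink (n1 φ v0) (n1 φ v0) = 1 ∧
        ∀ u ∈ I, ∀ v ∈ J, mink (z f g φ u v) (n1 φ v0) = 0) := by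
  refine ⟨fun u hu v hv => part1 f g φ u v, fun hκ => ?_⟩
  have hconst : ∀ v ∈ J, ∀ v0 ∈ J, n1 φ v = n1 φ v0 := by
    intro v hv v0 hv0
    funext i
    exact const_of_hasDerivAt_zero hJopen hJconn
      (n1_comp_deriv_zero hJopen hφ hφpos hκ i) v hv v0 hv0
  refine ⟨hconst, fun v0 hv0 => ⟨unit_n1 φ v0 (hφpos v0 hv0), fun u hu v hv => ?_⟩⟩
  rw [← hconst v hv v0 hv0]
  exact part1 f g φ u v


end
end MeridianParabolic
end
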